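/- Let α>0, ω>0 with 2ω<α, let (a,b) satisfy 0<a<b, a²+b²=1, ab=ω/α, and let A = [[2b²+αa², −ω(2+α)/α], [−ω(2+α)/α, 2a²+αb²]]. Define μ = 2ω(α+2) / ( α( (α−2)·sqrt(1−4ω²/α²) + sqrt((α−2)² + 32ω²/α) ) ). Then μ > 0 and the vector (1, μ) is an eigenvector of A with eigenvalue λ₋² = (1/2)((α+2) − sqrt((α−2)² + 32ω²/α)). -/

import Mathlib

set_option maxHeartbeats 1000000

theorem stmt_18 (α ω a b : ℝ) (hα : 0 < α) (hω : 0 < ω) (hcond : 2 * ω < α)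
    (ha : 0 < a) (hab : a < b) (h1 : a ^ 2 + b ^ 2 = 1) (h2 : a * b = ω / α) :
    let A : Matrix (Fin 2) (Fin 2) ℝ :=
      !![2 * b ^ 2 + α * a ^ 2, -(ω * (2 + α) / α);
         -(ω * (2 + α) / α), 2 * a ^ 2 + α * b ^ 2]
    let μ : ℝ := 2 * ω * (α + 2) /
      (α * ((α - 2) * Real.sqrt (1 - 4 * ω ^ 2 / α ^ 2) +
        Real.sqrt ((α - 2) ^ 2 + 32 * ω ^ 2 / α)))
    let lm : ℝ := 1 / 2 * ((α + 2) - Real.sqrt ((α - 2) ^ 2 + 32 * ω ^ 2 / α))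
    0 < μ ∧ A.mulVec ![1, μ] = lm • ![1, μ] := by
  intro A μ lm
  have hα' : α ≠ 0 := hα.ne'
  have h2' : a * b * α = ω := by
    field_simp at h2; linarith
  have hω2 : 4 * ω ^ 2 / α ^ 2 = 4 * a ^ 2 * b ^ 2 := by
    rw [← h2']; field_simp
  have hsq : 1 - 4 * ω ^ 2 / α ^ 2 = (b ^ 2 - a ^ 2) ^ 2 := by
    rw [hω2]; linear_combination (-(a^2+b^2+1))*h1
  set s : ℝ := Real.sqrt (1 - 4 * ω ^ 2 / α ^ 2) with hs_def
  set S : ℝ := Real.sqrt ((α - 2) ^ 2 + 32 * ω ^ 2 / α) with hS_def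
  have hba : s = b ^ 2 - a ^ 2 := by
    rw [hs_def, hsq, Real.sqrt_sq (by nlinarith : (0:ℝ) ≤ b ^ 2 - a ^ 2)]
  have hs2 : s ^ 2 = 1 - 4 * ω ^ 2 / α ^ 2 := by rw [hba, hsq]
  have hS2 : S ^ 2 = (α - 2) ^ 2 + 32 * ω ^ 2 / α :=
    Real.sq_sqrt (by positivity)
  have hS_nn : 0 ≤ S := Real.sqrt_nonneg _
  have hs_nn : 0 ≤ s := Real.sqrt_nonneg _
  have hs2' : s ^ 2 * α ^ 2 = α ^ 2 - 4 * ω ^ 2 := by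
    rw [hs2]; field_simp
  have hS2' : S ^ 2 * α = (α - 2) ^ 2 * α + 32 * ω ^ 2 := by
    rw [hS2]; field_simp
  have hkey' : (S ^ 2 - (α - 2) ^ 2 * s ^ 2) * α ^ 2 = 4 * ω ^ 2 * (α + 2) ^ 2 := by
    linear_combination α * hS2' - (α - 2) ^ 2 * hs2'
  have hlt : ((α - 2) * s) ^ 2 < S ^ 2 := by
    nlinarith [hkey', sq_nonneg α, mul_pos (mul_pos hω hω) (mul_pos hα hα)]
  have hS_pos : 0 < S := by
    nlinarith [hlt, hS_nn, sq_nonneg ((α - 2) * s)]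
  have hpos : 0 < (α - 2) * s + S := by
    nlinarith [hlt, hS_pos, sq_nonneg ((α - 2) * s + S)]
  have hden : 0 < α * ((α - 2) * s + S) := mul_pos hα hpos
  have hden' : α * ((α - 2) * s + S) ≠ 0 := hden.ne'
  have hμ : μ = 2 * ω * (α + 2) / (α * ((α - 2) * s + S)) := rfl
  have hlm : lm = 1 / 2 * ((α + 2) - S) := rfl
  constructor
  · rw [hμ]; exact div_pos (by positivity) hden
  · funext i
    fin_cases i <;>
      simp [Matrix.mulVec, dotProduct, Fin.sum_univ_two, A, hμ, hlm]
    · field_simp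
      linear_combination (α^2*((α-2)*s+S)*(2+α))*h1 - (α^2*((α-2)*s+S)*(2-α))*hba + hkey'
    · field_simp
      linear_combination ((α+2)*(2+α))*h1 - ((α+2)*(α-2))*hba
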